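/- Let P be a finite poset with n elements and let x_1, x_2, …, x_n be a linear extension of P, i.e., an enumeration of all elements of P such that x_i ≤ x_j implies i ≤ j. Then the composite map σ_{x_1} ∘ σ_{x_2} ∘ ⋯ ∘ σ_{x_n} (in which σ_{x_n} is applied first and σ_{x_1} last) coincides with the rowmotion operation Φ_J on J(P). -/

import Mathlib

open scoped symmDiff

open scoped Classical in
/-- The toggle `σ_x` on order ideals (lower sets): send `I` to `I ∆ {x}`
if that is again a lower set, and to `I` otherwise. -/
noncomputable def toggle {P : Type*} [PartialOrder P] (x : P) (I : Set P) : Set P :=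
  if IsLowerSet (I ∆ {x}) then I ∆ {x} else I

/-- Rowmotion on order ideals: `I` maps to the lower set generated by the
minimal elements of the complement of `I`. -/
def rowmotion {P : Type*} [PartialOrder P] (I : Set P) : Set P :=
  {y | ∃ m, m ∉ I ∧ (∀ z ∉ I, z ≤ m → z = m) ∧ y ≤ m}

theorem rowmotion_eq_toggle_linear_extension
    {P : Type*} [PartialOrder P] [Fintype P]
    (n : ℕ) (hcard : Fintype.card P = n)
    (x : Fin n → P) (hbij : Function.Bijective x)
    (hlin : ∀ i j : Fin n, x i ≤ x j → i ≤ j) :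
    ∀ I : Set P, IsLowerSet I →
      List.foldr toggle I (List.ofFn x) = rowmotion I := by
  intro I hI
  classical
  set e := Equiv.ofBijective x hbij with he
  have hxe : ∀ p, x (e.symm p) = p := fun p => e.apply_symm_apply p
  have hidx : ∀ i, e.symm (x i) = i := fun i => e.symm_apply_apply i
  have hle : ∀ a b : P, a ≤ b → ((e.symm a : Fin n) : ℕ) ≤ ((e.symm b : Fin n) : ℕ) := by
    intro a b hab
    exact hlin _ _ (by rw [hxe, hxe]; exact hab)
  have hmono : ∀ a b : P, a < b → ((e.symm a : Fin n) : ℕ) < ((e.symm b : Fin n) : ℕ) := by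
    intro a b hab
    refine lt_of_le_of_ne (hle a b hab.le) ?_
    intro h
    exact hab.ne (by rw [← hxe a, ← hxe b]; exact congrArg x (Fin.ext h))
  set R := rowmotion I with hR
  have hRlow : IsLowerSet R := by
    intro a b hba ha
    obtain ⟨m, h1, h2, h3⟩ := ha
    exact ⟨m, h1, h2, hba.trans h3⟩
  have hF2 : ∀ p, p ∉ I → ∃ m, m ∉ I ∧ (∀ z, z ∉ I → z ≤ m → z = m) ∧ m ≤ p := by
    intro p hp
    obtain ⟨m, ⟨hmI, hmp⟩, hmin⟩ :=
      Set.Finite.exists_minimal (s := {z | z ∉ I ∧ z ≤ p}) (Set.toFinite _) ⟨p, hp, le_refl p⟩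
    refine ⟨m, hmI, ?_, hmp⟩
    intro z hz hzm
    exact le_antisymm hzm (hmin ⟨hz, hzm.trans hmp⟩ hzm)
  set J : ℕ → Set P := fun k =>
    {p | (k ≤ ((e.symm p : Fin n) : ℕ) ∧ p ∈ R) ∨ (((e.symm p : Fin n) : ℕ) < k ∧ p ∈ I)}
    with hJ
  have hJlower : ∀ k, IsLowerSet (J k) := by
    intro k a b hba ha
    rcases ha with ⟨hka, haR⟩ | ⟨hka, haI⟩
    · by_cases hb : k ≤ ((e.symm b : Fin n) : ℕ)
      · exact Or.inl ⟨hb, hRlow hba haR⟩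
      · refine Or.inr ⟨by omega, ?_⟩
        by_contra hbI
        obtain ⟨m, hmI, hmmin, ham⟩ := haR
        have hbm : b = m := hmmin b hbI (hba.trans ham)
        have : a = b := le_antisymm (hbm ▸ ham) hba
        subst this
        omega
    · exact Or.inr ⟨lt_of_le_of_lt (hle b a hba) hka, hI hba haI⟩
  have hJn : J n = I := by
    ext p
    simp only [hJ, Set.mem_setOf_eq]
    have hpn : ((e.symm p : Fin n) : ℕ) < n := (e.symm p).isLt
    constructor
    · rintro (⟨h1, _⟩ | ⟨_, h2⟩)
      · omega
      · exact h2
    · intro h; exact Or.inr ⟨hpn, h⟩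
  have hJ0 : J 0 = R := by
    ext p
    simp only [hJ, Set.mem_setOf_eq]
    constructor
    · rintro (⟨_, h2⟩ | ⟨h1, _⟩)
      · exact h2
      · omega
    · intro h; exact Or.inl ⟨Nat.zero_le _, h⟩
  have hstep : ∀ (k : ℕ) (hk : k < n), toggle (x ⟨k, hk⟩) (J (k + 1)) = J k := by
    intro k hk
    set v := x ⟨k, hk⟩ with hv
    have hvidx : ((e.symm v : Fin n) : ℕ) = k := by rw [hv, hidx]
    have hne_idx : ∀ p : P, p ≠ v → ((e.symm p : Fin n) : ℕ) ≠ k := by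
      intro p hp h
      exact hp (by rw [← hxe p, ← hxe v]; exact congrArg x (Fin.ext (h.trans hvidx.symm)))
    have hmemne : ∀ p : P, p ≠ v → (p ∈ J (k + 1) ↔ p ∈ J k) := by
      intro p hp
      have hpk := hne_idx p hp
      simp only [hJ, Set.mem_setOf_eq]
      constructor
      · rintro (⟨h1, h2⟩ | ⟨h1, h2⟩)
        · exact Or.inl ⟨by omega, h2⟩
        · exact Or.inr ⟨by omega, h2⟩
      · rintro (⟨h1, h2⟩ | ⟨h1, h2⟩)
        · exact Or.inl ⟨by omega, h2⟩
        · exact Or.inr ⟨by omega, h2⟩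
    have hvJ1 : v ∈ J (k + 1) ↔ v ∈ I := by
      simp only [hJ, Set.mem_setOf_eq, hvidx]
      constructor
      · rintro (⟨h1, _⟩ | ⟨_, h2⟩)
        · omega
        · exact h2
      · intro h; exact Or.inr ⟨by omega, h⟩
    have hvJ0 : v ∈ J k ↔ v ∈ R := by
      simp only [hJ, Set.mem_setOf_eq, hvidx]
      constructor
      · rintro (⟨_, h2⟩ | ⟨h1, _⟩)
        · exact h2
        · omega
      · intro h; exact Or.inl ⟨le_refl _, h⟩
    by_cases hvI : v ∈ I <;> by_cases hvR : v ∈ R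
    · -- v ∈ I, v ∈ R : toggle does nothing, J (k+1) = J k
      have heq : J (k + 1) = J k := by
        ext p
        by_cases hp : p = v
        · subst hp; rw [hvJ1, hvJ0]; exact iff_of_true hvI hvR
        · exact hmemne p hp
      obtain ⟨m, hmI, hmmin, hvm⟩ := hvR
      have hvm' : v < m := lt_of_le_of_ne hvm (by rintro rfl; exact hmI hvI)
      have hmR : m ∈ R := ⟨m, hmI, hmmin, le_refl m⟩
      have hmidx : k < ((e.symm m : Fin n) : ℕ) := hvidx ▸ hmono v m hvm'
      have hmJ : m ∈ J (k + 1) := Or.inl ⟨by omega, hmR⟩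
      have hvJ : v ∈ J (k + 1) := hvJ1.mpr hvI
      have hns : ¬ IsLowerSet (J (k + 1) ∆ {v}) := by
        intro hls
        have hmS : m ∈ J (k + 1) ∆ {v} :=
          Set.mem_symmDiff.mpr (Or.inl ⟨hmJ, by simp [hvm'.ne']⟩)
        have hvS : v ∈ J (k + 1) ∆ {v} := hls hvm hmS
        rcases Set.mem_symmDiff.mp hvS with ⟨_, h⟩ | ⟨_, h⟩
        · exact h rfl
        · exact h hvJ
      unfold toggle
      rw [if_neg hns]
      exact heq
    · -- v ∈ I, v ∉ R : toggle removes v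
      have heq : J (k + 1) ∆ {v} = J k := by
        ext p
        by_cases hp : p = v
        · subst hp
          constructor
          · intro hS
            rcases Set.mem_symmDiff.mp hS with ⟨_, h⟩ | ⟨_, h⟩
            · exact absurd rfl h
            · exact absurd (hvJ1.mpr hvI) h
          · intro h; exact absurd (hvJ0.mp h) hvR
        · rw [show (p ∈ J (k + 1) ∆ {v}) ↔ p ∈ J (k + 1) from
            ⟨fun hS => by
              rcases Set.mem_symmDiff.mp hS with ⟨h, _⟩ | ⟨h, _⟩
              · exact h
              · exact absurd h hp,
             fun h => Set.mem_symmDiff.mpr (Or.inl ⟨h, hp⟩)⟩]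
          exact hmemne p hp
      unfold toggle
      rw [heq, if_pos (hJlower k)]
    · -- v ∉ I, v ∈ R : toggle adds v
      have heq : J (k + 1) ∆ {v} = J k := by
        ext p
        by_cases hp : p = v
        · subst hp
          constructor
          · intro _; exact hvJ0.mpr hvR
          · intro _
            exact Set.mem_symmDiff.mpr (Or.inr ⟨rfl, fun h => hvI (hvJ1.mp h)⟩)
        · rw [show (p ∈ J (k + 1) ∆ {v}) ↔ p ∈ J (k + 1) from
            ⟨fun hS => by
              rcases Set.mem_symmDiff.mp hS with ⟨h, _⟩ | ⟨h, _⟩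
              · exact h
              · exact absurd h hp,
             fun h => Set.mem_symmDiff.mpr (Or.inl ⟨h, hp⟩)⟩]
          exact hmemne p hp
      unfold toggle
      rw [heq, if_pos (hJlower k)]
    · -- v ∉ I, v ∉ R : toggle does nothing
      have heq : J (k + 1) = J k := by
        ext p
        by_cases hp : p = v
        · subst hp; rw [hvJ1, hvJ0]; exact iff_of_false hvI hvR
        · exact hmemne p hp
      obtain ⟨m, hmI, hmmin, hmv⟩ := hF2 v hvI
      have hmv' : m < v := by
        refine lt_of_le_of_ne hmv ?_
        rintro rfl
        exact hvR ⟨v, hmI, hmmin, le_refl v⟩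
      have hmidx : ((e.symm m : Fin n) : ℕ) < k := hvidx ▸ hmono m v hmv'
      have hmJ : m ∉ J (k + 1) := by
        rintro (⟨h1, _⟩ | ⟨_, h2⟩)
        · omega
        · exact hmI h2
      have hvJ : v ∉ J (k + 1) := fun h => hvI (hvJ1.mp h)
      have hns : ¬ IsLowerSet (J (k + 1) ∆ {v}) := by
        intro hls
        have hvS : v ∈ J (k + 1) ∆ {v} :=
          Set.mem_symmDiff.mpr (Or.inr ⟨rfl, hvJ⟩)
        have hmS : m ∈ J (k + 1) ∆ {v} := hls hmv hvS
        rcases Set.mem_symmDiff.mp hmS with ⟨h, _⟩ | ⟨h, _⟩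
        · exact hmJ h
        · exact hmv'.ne h
      unfold toggle
      rw [if_neg hns]
      exact heq
  have hfold : ∀ (d k : ℕ), k + d = n →
      List.foldr toggle I (List.drop k (List.ofFn x)) = J k := by
    intro d
    induction d with
    | zero =>
      intro k hkn
      have hk : k = n := by omega
      rw [List.drop_eq_nil_of_le (by simp [hk])]
      simp only [List.foldr_nil]
      rw [hk, hJn]
    | succ d ih =>
      intro k hkn
      have hk : k < n := by omega
      have hlen : k < (List.ofFn x).length := by simpa using hk
      rw [List.drop_eq_getElem_cons hlen, List.foldr_cons, ih (k + 1) (by omega)]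
      rw [List.getElem_ofFn]
      exact hstep k hk
  have := hfold n 0 (by omega)
  simpa [hJ0, hR] using this
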